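/- arXiv:math/0006055 — 2 statements merged into one kernel-verified Lean document; each statement's English description precedes it below -/
import Mathlib

section
/- Let ℓ_n : J_n → Z/2Z be the length homomorphism with ℓ_n(α_T) = 1 + |T| mod 2, and let PJ_n = ker(φ : J_n → Σ_n). Then the restriction of ℓ_n to PJ_n is nontrivial for n ≥ 4: the pure quasi-braid p = α_{(1,2)} α_{(2,3)} α_{(1,2)} α_{(1,2,3)} lies in PJ_4 and satisfies ℓ_4(p) = 1. -/
/-- Generators of the quasi-braid group `J_n`: intervals `{p.1,...,p.2}` (0-indexed)
of at least two points inside `{0,...,n-1}`, corresponding to the connected subsets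
`{σ_{p.1+1},...,σ_{p.2}}` of the Coxeter generators of `Σ_n`. -/
def IntervalGen (n : ℕ) : Type := {p : ℕ × ℕ // p.1 < p.2 ∧ p.2 < n}

/-- The action `j_T T' = ω_T T' ω_T` on subintervals: if `T' = {c,...,d} ⊆ T = {a,...,b}`
then `j_T T' = {a+b-d,...,a+b-c}`; otherwise it is defined to be `T'`. -/
def jmap {n : ℕ} (T T' : IntervalGen n) : IntervalGen n :=
  if h : T.1.1 ≤ T'.1.1 ∧ T'.1.2 ≤ T.1.2 then
    ⟨(T.1.1 + T.1.2 - T'.1.2, T.1.1 + T.1.2 - T'.1.1), by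
      obtain ⟨h1, h2⟩ := T.2; obtain ⟨h3, h4⟩ := T'.2; constructor <;> omega⟩
  else T'

/-- The defining relations of the quasi-braid group `J_n`:
`α_T² = 1`; `α_T α_{T'} = α_{j_T T'} α_T` for `T' ⊆ T`; and `α_T α_{T'} = α_{T'} α_T`
when the intervals `T` and `T'` are disjoint and non-adjacent. -/
def QBRels (n : ℕ) : Set (FreeGroup (IntervalGen n)) :=
  {w | (∃ T : IntervalGen n, w = FreeGroup.of T * FreeGroup.of T) ∨
    (∃ T T' : IntervalGen n, T.1.1 ≤ T'.1.1 ∧ T'.1.2 ≤ T.1.2 ∧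
      w = FreeGroup.of T * FreeGroup.of T' * (FreeGroup.of (jmap T T'))⁻¹ *
        (FreeGroup.of T)⁻¹) ∨
    (∃ T T' : IntervalGen n, T.1.2 + 1 < T'.1.1 ∧
      w = FreeGroup.of T * FreeGroup.of T' * (FreeGroup.of T)⁻¹ * (FreeGroup.of T')⁻¹)}

/-- The quasi-braid group `J_n`, presented by generators `α_T` and the quasi-braid
relations. -/
abbrev J (n : ℕ) : Type := PresentedGroup (QBRels n)


/-- The underlying map of the reversal of the (0-indexed) interval `{a,...,b}` in `Fin n`. -/
def revFun (n a b : ℕ) (k : Fin n) : Fin n :=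
  if h : a ≤ (k : ℕ) ∧ (k : ℕ) ≤ b ∧ b < n then ⟨a + b - (k : ℕ), by omega⟩ else k

lemma revFun_involutive (n a b : ℕ) : Function.Involutive (revFun n a b) := by
  intro k
  unfold revFun
  by_cases h : a ≤ (k : ℕ) ∧ (k : ℕ) ≤ b ∧ b < n
  · rw [dif_pos h, dif_pos (by simp; omega)]
    ext
    simp
    omega
  · rw [dif_neg h, dif_neg h]

/-- The reversal permutation `ω_{(a,...,b)}` of the interval `{a,...,b}` in `Σ_n`:
the longest element of the parabolic subgroup generated by the corresponding
Coxeter generators. -/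
def revPerm (n a b : ℕ) : Equiv.Perm (Fin n) :=
  Function.Involutive.toPerm (revFun n a b) (revFun_involutive n a b)

/-- the restriction of the length homomorphism `ℓ_4 : J_4 → ℤ/2ℤ`
(with `ℓ_4(α_T) = 1 + |T|`, `|T|` the number of Coxeter generators of the interval `T`)
to the pure quasi-braid group `PJ_4 = ker(φ : J_4 → Σ_4)` is nontrivial: the element
`p = α_{(1,2)} α_{(2,3)} α_{(1,2)} α_{(1,2,3)}` (0-indexed intervals
`(0,1), (1,2), (0,1), (0,2)`) lies in `ker φ` and satisfies `ℓ_4(p) = 1`. -/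
theorem length_nontrivial_on_pure_quasi_braids
    (φ : J 4 →* Equiv.Perm (Fin 4))
    (hφ : ∀ T : IntervalGen 4, φ (PresentedGroup.of T) = revPerm 4 T.1.1 T.1.2)
    (ℓ : J 4 →* Multiplicative (ZMod 2))
    (hℓ : ∀ T : IntervalGen 4, ℓ (PresentedGroup.of T) =
      Multiplicative.ofAdd (1 + ((T.1.2 - T.1.1 : ℕ) : ZMod 2)))
    (p : J 4)
    (hp : p = PresentedGroup.of ⟨(0, 1), by omega⟩ * PresentedGroup.of ⟨(1, 2), by omega⟩ *
      PresentedGroup.of ⟨(0, 1), by omega⟩ * PresentedGroup.of ⟨(0, 2), by omega⟩) :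
    φ p = 1 ∧ ℓ p = Multiplicative.ofAdd 1 := by
  subst hp
  constructor
  · simp only [map_mul, hφ ⟨(0, 1), by omega⟩, hφ ⟨(1, 2), by omega⟩, hφ ⟨(0, 2), by omega⟩]
    ext k
    fin_cases k <;> rfl
  · simp only [map_mul, hℓ ⟨(0, 1), by omega⟩, hℓ ⟨(1, 2), by omega⟩, hℓ ⟨(0, 2), by omega⟩]
    decide
end

section
/- The number of connected components of M_{0,n+1}(R) = ((RP¹)^{n+1} \ Δ)/PGL(2,R), equivalently of the complement of the projectivized braid arrangement in RP^{n-2}, is n!/2 for n ≥ 3: the projective Weyl chambers W^σ and W^{σω} coincide, where ω is the order-reversing permutation, and W^σ = W^τ in RP^{n-2} implies τ ∈ {σ, σω}. -/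
lemma revPerm_coe {n : ℕ} (k : Fin n) :
    ((revPerm n 0 (n-1)) k : ℕ) = n - 1 - (k : ℕ) := by
  have hk := k.isLt
  simp only [revPerm, Function.Involutive.coe_toPerm, revFun]
  rw [dif_pos (by omega)]
  simp

lemma revPerm_sq (n : ℕ) : revPerm n 0 (n-1) * revPerm n 0 (n-1) = 1 := by
  ext k
  simpa [Equiv.Perm.mul_apply, revPerm] using congrArg Fin.val (revFun_involutive n 0 (n-1) k)

def Wset (n : ℕ) (σ : Equiv.Perm (Fin n)) : Set (Fin n → ℝ) :=
  {a | (∑ i, a i = 0) ∧ StrictMono fun i => a (σ i)}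

lemma neg_mem_Wset {n : ℕ} {σ : Equiv.Perm (Fin n)} {a : Fin n → ℝ}
    (ha : a ∈ Wset n σ) : (-a) ∈ Wset n (σ * revPerm n 0 (n-1)) := by
  obtain ⟨hs, hm⟩ := ha
  refine ⟨by simpa using hs, ?_⟩
  intro i j hij
  have hji : (revPerm n 0 (n-1)) j < (revPerm n 0 (n-1)) i := by
    rw [Fin.lt_def, revPerm_coe, revPerm_coe]
    have := j.isLt
    have := Fin.lt_def.mp hij
    omega
  simpa [Equiv.Perm.mul_apply] using neg_lt_neg (hm hji)

lemma neg_image_Wset {n : ℕ} (σ : Equiv.Perm (Fin n)) :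
    (fun a : Fin n → ℝ => -a) '' Wset n σ = Wset n (σ * revPerm n 0 (n-1)) := by
  apply Set.Subset.antisymm
  · rintro _ ⟨a, ha, rfl⟩
    exact neg_mem_Wset ha
  · intro b hb
    refine ⟨-b, ?_, by simp⟩
    have := neg_mem_Wset hb
    rwa [mul_assoc, revPerm_sq, mul_one] at this

lemma Wset_nonempty {n : ℕ} (hn : 1 ≤ n) (σ : Equiv.Perm (Fin n)) :
    (Wset n σ).Nonempty := by
  set c : ℝ := (∑ j : Fin n, ((j : ℕ) : ℝ)) / n with hc
  refine ⟨fun i => ((σ.symm i : ℕ) : ℝ) - c, ?_, ?_⟩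
  · have h1 : ∑ i : Fin n, ((σ.symm i : ℕ) : ℝ) = ∑ j : Fin n, ((j : ℕ) : ℝ) :=
      Equiv.sum_comp σ.symm (fun j => ((j : ℕ) : ℝ))
    have hn0 : (n : ℝ) ≠ 0 := by positivity
    simp [Finset.sum_sub_distrib, h1, hc]
    field_simp
    ring
  · intro i j hij
    simp only [Equiv.symm_apply_apply]
    have : ((i : ℕ) : ℝ) < ((j : ℕ) : ℝ) := by exact_mod_cast Fin.lt_def.mp hij
    linarith

lemma Wset_eq_of_mem {n : ℕ} {σ τ : Equiv.Perm (Fin n)} {a : Fin n → ℝ}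
    (hσ : a ∈ Wset n σ) (hτ : a ∈ Wset n τ) : σ = τ := by
  obtain ⟨-, hf⟩ := hσ
  obtain ⟨-, hg⟩ := hτ
  have hrange : Set.range (fun i => a (σ i)) = Set.range (fun i => a (τ i)) := by
    have h1 : Set.range (fun i => a (σ i)) = Set.range a := σ.surjective.range_comp a
    have h2 : Set.range (fun i => a (τ i)) = Set.range a := τ.surjective.range_comp a
    rw [h1, h2]
  have inst : WellFoundedLT (Fin n) := inferInstance
  have heq : (fun i => a (σ i)) = fun i => a (τ i) :=
    (@StrictMono.range_inj (Fin n) ℝ _ _ inst _ _ hf hg).mp hrange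
  have hainj : Function.Injective a := by
    intro x y hxy
    have h3 : a (σ (σ.symm x)) = a (σ (σ.symm y)) := by simpa using hxy
    have h4 := hf.injective h3
    simpa using congrArg σ h4
  ext i : 1
  exact hainj (congrFun heq i)

/-- the moduli space `M_{0,n+1}(ℝ)`, i.e. the complement of the
projectivized braid arrangement in `ℝP^{n-2}`, has `n!/2` connected components for
`n ≥ 3`: in projective space the Weyl chambers `W^σ` and `W^{σω}` coincide (`ω` the
order-reversing permutation), and this is the only identification.  We model the
projective chamber of `σ` as `PW σ = W σ ∪ (-W σ)` where `W σ` is the affine cone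
`{a : Σ aᵢ = 0, a_{σ(1)} < ⋯ < a_{σ(n)}}`: then `PW σ = PW τ ↔ τ ∈ {σ, σω}`, and
there are exactly `n!/2` distinct projective chambers. -/
theorem projective_weyl_chambers (n : ℕ) (hn : 3 ≤ n)
    (W : Equiv.Perm (Fin n) → Set (Fin n → ℝ))
    (hW : ∀ σ, W σ = {a | (∑ i, a i = 0) ∧ StrictMono fun i => a (σ i)})
    (PW : Equiv.Perm (Fin n) → Set (Fin n → ℝ))
    (hPW : ∀ σ, PW σ = W σ ∪ (fun a => -a) '' W σ) :
    (∀ σ τ, PW σ = PW τ ↔ τ = σ ∨ τ = σ * revPerm n 0 (n - 1)) ∧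
    Nat.card (Set.range PW) = n.factorial / 2 := by
  classical
  set ω : Equiv.Perm (Fin n) := revPerm n 0 (n-1) with hω
  have hPW' : ∀ σ, PW σ = Wset n σ ∪ Wset n (σ * ω) := by
    intro σ
    rw [hPW, hW, ← neg_image_Wset]
    rfl
  have key : ∀ σ τ, PW σ = PW τ ↔ τ = σ ∨ τ = σ * ω := by
    intro σ τ
    constructor
    · intro h
      obtain ⟨a, ha⟩ := Wset_nonempty (by omega) σ
      have hmem : a ∈ Wset n τ ∪ Wset n (τ * ω) := by
        rw [← hPW', ← h, hPW']; exact Or.inl ha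
      rcases hmem with h1 | h1
      · exact Or.inl (Wset_eq_of_mem h1 ha)
      · right
        have h2 : τ * ω = σ := Wset_eq_of_mem h1 ha
        rw [← h2, mul_assoc, revPerm_sq, mul_one]
    · rintro (rfl | rfl)
      · rfl
      · rw [hPW', hPW', mul_assoc, revPerm_sq, mul_one, Set.union_comm]
  refine ⟨key, ?_⟩
  have h0 : 0 < n := by omega
  have h1 : n - 1 < n := by omega
  set z : Fin n := ⟨0, h0⟩ with hz
  set m : Fin n := ⟨n-1, h1⟩ with hm
  have hωz : ω z = m := by
    ext
    rw [hω]
    rw [show ((revPerm n 0 (n-1)) z : ℕ) = n - 1 - (z : ℕ) from revPerm_coe z]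
    simp [hz, hm]
  have hωm : ω m = z := by
    ext
    rw [hω]
    rw [show ((revPerm n 0 (n-1)) m : ℕ) = n - 1 - (m : ℕ) from revPerm_coe m]
    simp [hz, hm]
  have hne : ∀ σ : Equiv.Perm (Fin n), σ z ≠ σ m := by
    intro σ h
    have := σ.injective h
    rw [hz, hm, Fin.ext_iff] at this
    simp at this
    omega
  set p : Equiv.Perm (Fin n) → Prop := fun σ => σ z < σ m with hp
  have hswap : ∀ σ : Equiv.Perm (Fin n), (σ * ω) z = σ m ∧ (σ * ω) m = σ z := by
    intro σ
    constructor <;> simp [Equiv.Perm.mul_apply, hωz, hωm]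
  have hrange : Set.range PW = PW '' {σ | p σ} := by
    apply Set.Subset.antisymm
    · rintro _ ⟨σ, rfl⟩
      by_cases hσ : p σ
      · exact ⟨σ, hσ, rfl⟩
      · refine ⟨σ * ω, ?_, ?_⟩
        · show (σ * ω) z < (σ * ω) m
          rw [(hswap σ).1, (hswap σ).2]
          exact lt_of_le_of_ne (not_lt.mp hσ) (hne σ).symm
        · exact ((key σ (σ * ω)).mpr (Or.inr rfl)).symm
    · rintro _ ⟨σ, _, rfl⟩; exact ⟨σ, rfl⟩
  have hinj : Set.InjOn PW {σ | p σ} := by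
    intro σ hσ τ hτ h
    rcases (key σ τ).mp h with rfl | rfl
    · rfl
    · exfalso
      have h2 : (σ * ω) z < (σ * ω) m := hτ
      rw [(hswap σ).1, (hswap σ).2] at h2
      exact absurd (hσ : σ z < σ m) (not_lt.mpr h2.le)
  rw [hrange, Nat.card_coe_set_eq, Set.ncard_image_of_injOn hinj,
     Set.ncard_eq_toFinset_card', Set.toFinset_setOf]
  have hsum := Finset.card_filter_add_card_filter_not (s := (Finset.univ : Finset (Equiv.Perm (Fin n)))) p
  have hcard : Fintype.card (Equiv.Perm (Fin n)) = n.factorial := by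
    simp [Fintype.card_perm]
  have hbij : (Finset.univ.filter p).card = (Finset.univ.filter (fun σ => ¬ p σ)).card := by
    apply Finset.card_nbij' (fun σ => σ * ω) (fun σ => σ * ω)
    · intro σ hσ
      simp only [Finset.mem_coe, Finset.mem_filter, Finset.mem_univ, true_and] at hσ ⊢
      intro hcon
      have h2 : (σ * ω) z < (σ * ω) m := hcon
      rw [(hswap σ).1, (hswap σ).2] at h2
      exact absurd (hσ : σ z < σ m) (not_lt.mpr h2.le)
    · intro σ hσ
      simp only [Finset.mem_coe, Finset.mem_filter, Finset.mem_univ, true_and] at hσ ⊢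
      show (σ * ω) z < (σ * ω) m
      rw [(hswap σ).1, (hswap σ).2]
      exact lt_of_le_of_ne (not_lt.mp hσ) (hne σ).symm
    · intro σ _
      dsimp only
      rw [mul_assoc]
      rw [hω, revPerm_sq, mul_one]
    · intro σ _
      dsimp only
      rw [mul_assoc]
      rw [hω, revPerm_sq, mul_one]
  rw [Finset.card_univ, hcard] at hsum
  omega
end
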